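/- Let λ_B > 0, Υ > 0, α > 0 and define Λ_B(p) = λ_B·Υ·p^{2/α} for p ≥ 0. Let L ∈ ℕ, let v_0, …, v_L ≥ 0, and let 0 = t_0 < t_1 < ⋯ < t_L be real thresholds. For q > 0 let l*(q) denote the least index l ∈ {1,…,L} such that q ≤ t_l (defined whenever q ≤ t_L). Then for every k ∈ {1,…,L} and every p with t_{k−1} < p ≤ t_k, ∫₀^p (Σ_{l=l*(q)}^{L} v_l) · Λ_B'(q) dq = Σ_{l=0}^{k−1} v_l·Λ_B(t_l) + (Σ_{l=k}^{L} v_l)·Λ_B(p), where Λ_B'(q) = λ_B·Υ·(2/α)·q^{(2/α)−1}. -/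

import Mathlib

open MeasureTheory


/-- Lemma 1, Eq. (10) of the paper: intensity of available base
stations. With `Λ_B(p) = λ_B Υ p^{2/α}`, battery probabilities `v_0,…,v_L`,
thresholds `0 = t_0 < t_1 < ⋯ < t_L` and `l*(q)` the least `l ∈ {1,…,L}` with
`q ≤ t_l`, for every `k ∈ {1,…,L}` and `t_{k−1} < p ≤ t_k`,
`∫₀^p (∑_{l=l*(q)}^L v_l) Λ_B'(q) dq
  = ∑_{l=0}^{k−1} v_l Λ_B(t_l) + (∑_{l=k}^L v_l) Λ_B(p)`. -/
theorem stmt_10 (lamB Υ α : ℝ) (hlamB : 0 < lamB) (hΥ : 0 < Υ) (hα : 0 < α)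
    (ΛB : ℝ → ℝ) (hΛB : ∀ p : ℝ, ΛB p = lamB * Υ * p ^ (2 / α))
    (L : ℕ) (v : ℕ → ℝ) (hv : ∀ l, 0 ≤ v l)
    (t : ℕ → ℝ) (ht0 : t 0 = 0) (htmono : ∀ i < L, t i < t (i + 1))
    (lstar : ℝ → ℕ)
    (hlstar : ∀ q : ℝ, 0 < q → q ≤ t L →
      lstar q ∈ Finset.Icc 1 L ∧ q ≤ t (lstar q) ∧
        ∀ l ∈ Finset.Icc 1 L, q ≤ t l → lstar q ≤ l) :
    ∀ k ∈ Finset.Icc 1 L, ∀ p : ℝ, t (k - 1) < p → p ≤ t k →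
      ∫ q in (0 : ℝ)..p,
          (∑ l ∈ Finset.Icc (lstar q) L, v l) * (lamB * Υ * (2 / α) * q ^ (2 / α - 1)) =
        ∑ l ∈ Finset.range k, v l * ΛB (t l) + (∑ l ∈ Finset.Icc k L, v l) * ΛB p := by
  set f : ℝ → ℝ := fun q =>
    (∑ l ∈ Finset.Icc (lstar q) L, v l) * (lamB * Υ * (2 / α) * q ^ (2 / α - 1)) with hf
  set g : ℝ → ℝ := fun q => lamB * Υ * (2 / α) * q ^ (2 / α - 1) with hg
  have hr : (-1 : ℝ) < 2 / α - 1 := by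
    have : (0:ℝ) < 2 / α := by positivity
    linarith
  -- t is monotone on [0, L]
  have hmono : ∀ i j : ℕ, i ≤ j → j ≤ L → t i ≤ t j := by
    intro i j hij hjL
    induction j with
    | zero => simp_all
    | succ n ih =>
      rcases Nat.lt_or_ge i (n+1) with h | h
      · have h1 : t i ≤ t n := ih (Nat.lt_succ_iff.mp h) (le_of_lt hjL)
        have h2 : t n < t (n+1) := htmono n (by omega)
        linarith
      · have : i = n + 1 := le_antisymm hij h
        simp [this]
  have htnn : ∀ i, i ≤ L → 0 ≤ t i := by
    intro i hi; rw [← ht0]; exact hmono 0 i (Nat.zero_le _) hi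
  -- lstar is k on (t (k-1), t k]
  have hls : ∀ k : ℕ, 1 ≤ k → k ≤ L → ∀ q : ℝ, t (k-1) < q → q ≤ t k → lstar q = k := by
    intro k hk1 hkL q hq1 hq2
    have hq0 : 0 < q := lt_of_le_of_lt (htnn (k-1) (by omega)) hq1
    have hqL : q ≤ t L := le_trans hq2 (hmono k L hkL le_rfl)
    obtain ⟨hmem, hle, hmin⟩ := hlstar q hq0 hqL
    have h1 : lstar q ≤ k := hmin k (Finset.mem_Icc.mpr ⟨hk1, hkL⟩) hq2
    rcases Nat.lt_or_ge (lstar q) k with h | h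
    · exfalso
      have : t (lstar q) ≤ t (k-1) := hmono _ _ (by omega) (by omega)
      linarith
    · omega
  -- integral of c * g over [a,b] with 0 ≤ a
  have hint : ∀ (c a b : ℝ), (∫ q in a..b, c * g q)
      = c * (lamB * Υ * b ^ (2/α) - lamB * Υ * a ^ (2/α)) := by
    intro c a b
    have h1 : (∫ q in a..b, (q : ℝ) ^ (2/α - 1)) = (b ^ (2/α) - a ^ (2/α)) / (2/α) := by
      rw [integral_rpow (Or.inl hr)]
      ring_nf
    calc (∫ q in a..b, c * g q)
        = (c * (lamB * Υ * (2/α))) * ∫ q in a..b, (q : ℝ) ^ (2/α - 1) := by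
          rw [← intervalIntegral.integral_const_mul]
          refine intervalIntegral.integral_congr (fun q _ => ?_)
          simp only [hg]; ring
      _ = c * (lamB * Υ * b ^ (2/α) - lamB * Υ * a ^ (2/α)) := by
          rw [h1]; field_simp
  have hgint : ∀ (c a b : ℝ), IntervalIntegrable (fun q => c * g q) volume a b := by
    intro c a b
    exact ((intervalIntegral.intervalIntegrable_rpow' hr).const_mul (lamB * Υ * (2/α))).const_mul c
  -- f equals c_k * g on Ioc (t (k-1)) p
  have hcong : ∀ k : ℕ, 1 ≤ k → k ≤ L → ∀ p : ℝ, p ≤ t k →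
      ∀ q ∈ Set.Ioc (t (k-1)) p, f q = (∑ l ∈ Finset.Icc k L, v l) * g q := by
    intro k hk1 hkL p hp q hq
    have := hls k hk1 hkL q hq.1 (le_trans hq.2 hp)
    simp [hf, hg, this]
  -- the step : integral over t(k-1)..p
  have hstep : ∀ k : ℕ, 1 ≤ k → k ≤ L → ∀ p : ℝ, t (k-1) < p → p ≤ t k →
      IntervalIntegrable f volume (t (k-1)) p ∧
      (∫ q in (t (k-1))..p, f q)
        = (∑ l ∈ Finset.Icc k L, v l) * (lamB * Υ * p ^ (2/α) - lamB * Υ * (t (k-1)) ^ (2/α)) := by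
    intro k hk1 hkL p hp1 hp2
    have hab : t (k-1) ≤ p := le_of_lt hp1
    have heq := hcong k hk1 hkL p hp2
    constructor
    · rw [intervalIntegrable_iff_integrableOn_Ioc_of_le hab]
      exact (((hgint (∑ l ∈ Finset.Icc k L, v l) (t (k-1)) p).1).congr_fun
        (fun q hq => (heq q hq).symm) measurableSet_Ioc)
    · rw [intervalIntegral.integral_congr_ae (g := fun q => (∑ l ∈ Finset.Icc k L, v l) * g q)
        (Filter.Eventually.of_forall (fun q hq => by
          rw [Set.uIoc_of_le hab] at hq; exact heq q hq))]
      exact hint _ _ _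
  -- main induction
  have main : ∀ k : ℕ, 1 ≤ k → k ≤ L → ∀ p : ℝ, t (k-1) < p → p ≤ t k →
      IntervalIntegrable f volume 0 p ∧
      (∫ q in (0:ℝ)..p, f q)
        = ∑ l ∈ Finset.range k, v l * ΛB (t l) + (∑ l ∈ Finset.Icc k L, v l) * ΛB p := by
    intro k hk
    induction k, hk using Nat.le_induction with
    | base =>
      intro hL p hp1 hp2
      simp only [Nat.sub_self, ht0] at hp1
      obtain ⟨hi, hval⟩ := hstep 1 le_rfl hL p (by simpa [ht0]) hp2
      refine ⟨by simpa [ht0] using hi, ?_⟩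
      rw [show (0:ℝ) = t 0 by rw [ht0]] 
      rw [show t (1-1) = t 0 by norm_num] at hval
      rw [hval]
      simp [ht0, hΛB, Real.zero_rpow (by positivity : 2/α ≠ 0)]
    | succ n hn ih =>
      intro hL p hp1 hp2
      have hnL : n ≤ L := by omega
      have hn1 : 1 ≤ n := hn
      have htn : t (n-1) < t n := by
        have := htmono (n-1) (by omega)
        rwa [show n - 1 + 1 = n by omega] at this
      obtain ⟨ii, iv⟩ := ih hnL (t n) htn le_rfl
      have hstep' := hstep (n+1) (by omega) hL p (by simpa using hp1) hp2
      rw [show n + 1 - 1 = n from rfl] at hstep'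
      obtain ⟨si, sv⟩ := hstep'
      refine ⟨ii.trans si, ?_⟩
      rw [← intervalIntegral.integral_add_adjacent_intervals ii si, iv, sv]
      have hsplit : (∑ l ∈ Finset.Icc n L, v l) = v n + ∑ l ∈ Finset.Icc (n+1) L, v l := by
        have hs : Finset.Icc n L = insert n (Finset.Icc (n+1) L) := by
          ext x; simp only [Finset.mem_Icc, Finset.mem_insert]; omega
        rw [hs, Finset.sum_insert (by simp)]
      rw [Finset.sum_range_succ, hsplit, hΛB p, hΛB (t n)]
      ring
  intro k hk p hp1 hp2
  obtain ⟨hk1, hkL⟩ := Finset.mem_Icc.mp hk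
  exact (main k hk1 hkL p hp1 hp2).2
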